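/- Let α ∈ (0,1], σ > 0, γ > 0, N ∈ ℕ. Any minimizer (p_0,…,p_{N−1}) of the cost (γ/N)·Σ p_n^α subject to p_n ≥ 0 and (1/N)·Σ log₂(1 + p_n/σ²) = R must assign equal power to all active slots: for all n, n', if p_n > 0 and p_{n'} > 0 then p_n = p_{n'}. -/

import Mathlib

open Finset

noncomputable def Ff (α : ℝ) : ℝ → ℝ := fun u => (Real.exp u - 1) ^ α
noncomputable def Lf (α : ℝ) : ℝ → ℝ := fun u =>
  Real.log α + u + (α - 1) * Real.log (Real.exp u - 1)
noncomputable def DD (α c : ℝ) : ℝ → ℝ := fun u => Lf α u - Lf α (c - u)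
noncomputable def Ef : ℝ → ℝ := fun v => Real.exp v / (Real.exp v - 1)
noncomputable def D1f (α c : ℝ) : ℝ → ℝ := fun u => 2 + (α - 1) * (Ef u + Ef (c - u))
noncomputable def Phif (α c : ℝ) : ℝ → ℝ := fun u => Ff α u + Ff α (c - u)

lemma expm1_pos {u : ℝ} (hu : 0 < u) : 0 < Real.exp u - 1 := by
  have : Real.exp 0 < Real.exp u := Real.exp_lt_exp.mpr hu
  rw [Real.exp_zero] at this; linarith

lemma hasDerivAt_Lf {α : ℝ} {u : ℝ} (hu : 0 < u) :
    HasDerivAt (Lf α) (1 + (α - 1) * Ef u) u := by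
  have h1 : HasDerivAt (fun w : ℝ => Real.exp w - 1) (Real.exp u) u :=
    (Real.hasDerivAt_exp u).sub_const 1
  have h2 : HasDerivAt (fun w : ℝ => Real.log (Real.exp w - 1))
      (Real.exp u / (Real.exp u - 1)) u := h1.log (ne_of_gt (expm1_pos hu))
  have h3 := h2.const_mul (α - 1)
  have h4 : HasDerivAt (fun w : ℝ => Real.log α + w) 1 u := (hasDerivAt_id u).const_add _
  have h5 := h4.add h3
  have he : Lf α = fun w : ℝ =>
      (Real.log α + w) + (α - 1) * Real.log (Real.exp w - 1) := rfl
  rw [he, show (1 : ℝ) + (α - 1) * Ef u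
      = 1 + (α - 1) * (Real.exp u / (Real.exp u - 1)) from rfl]
  exact h5

lemma hasDerivAt_Ef {v : ℝ} (hv : 0 < v) :
    HasDerivAt Ef (-(Real.exp v) / (Real.exp v - 1) ^ 2) v := by
  have h1 := Real.hasDerivAt_exp v
  have h2 : HasDerivAt (fun w : ℝ => Real.exp w - 1) (Real.exp v) v := h1.sub_const 1
  have hne := ne_of_gt (expm1_pos hv)
  have h3 := h1.div h2 hne
  refine h3.congr_deriv (Eq.symm ?_)
  rw [div_left_inj' (pow_ne_zero 2 hne)]
  ring

lemma hasDerivAt_Ff {α : ℝ} (hα0 : 0 < α) {u : ℝ} (hu : 0 < u) :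
    HasDerivAt (Ff α) (Real.exp (Lf α u)) u := by
  have h1 : HasDerivAt (fun w : ℝ => Real.exp w - 1) (Real.exp u) u :=
    (Real.hasDerivAt_exp u).sub_const 1
  have h2 := h1.rpow_const (p := α) (Or.inl (ne_of_gt (expm1_pos hu)))
  refine h2.congr_deriv (Eq.symm ?_)
  rw [show Lf α u = Real.log α + u + (α - 1) * Real.log (Real.exp u - 1) from rfl]
  rw [Real.exp_add, Real.exp_add, Real.exp_log hα0]
  rw [show Real.exp ((α - 1) * Real.log (Real.exp u - 1))
      = (Real.exp u - 1 : ℝ) ^ (α - 1) by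
    rw [Real.rpow_def_of_pos (expm1_pos hu)]; ring_nf]
  ring

lemma hasDerivAt_DD {α c : ℝ} {u : ℝ} (hu : 0 < u) (huc : u < c) :
    HasDerivAt (DD α c) (D1f α c u) u := by
  have h1 := hasDerivAt_Lf (α := α) hu
  have hcu : 0 < c - u := by linarith
  have h2 := hasDerivAt_Lf (α := α) hcu
  have hin : HasDerivAt (fun x : ℝ => c - x) (-1) u := (hasDerivAt_id u).const_sub c
  have h3 := h2.comp u hin
  have h4 := h1.sub h3
  have he : DD α c = fun u => Lf α u - (Lf α ∘ fun x => c - x) u := by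
    funext x; simp [DD, Function.comp]
  rw [he]
  refine h4.congr_deriv (Eq.symm ?_)
  simp [D1f]
  ring

lemma hasDerivAt_D1f {α c : ℝ} {u : ℝ} (hu : 0 < u) (huc : u < c) :
    HasDerivAt (D1f α c)
      ((α - 1) * (-(Real.exp u) / (Real.exp u - 1) ^ 2
        + Real.exp (c - u) / (Real.exp (c - u) - 1) ^ 2)) u := by
  have hcu : 0 < c - u := by linarith
  have h1 := hasDerivAt_Ef hu
  have hin : HasDerivAt (fun x : ℝ => c - x) (-1) u := (hasDerivAt_id u).const_sub c
  have h2 := (hasDerivAt_Ef hcu).comp u hin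
  have h3 := ((h1.add h2).const_mul (α - 1)).const_add 2
  have he : D1f α c = fun u => 2 + (α - 1) * (Ef u + (Ef ∘ fun x => c - x) u) := by
    funext x; simp [D1f, Function.comp]
  rw [he]
  refine h3.congr_deriv (Eq.symm ?_)
  ring

lemma hasDerivAt_Phif {α c : ℝ} (hα0 : 0 < α) {u : ℝ} (hu : 0 < u) (huc : u < c) :
    HasDerivAt (Phif α c) (Real.exp (Lf α u) - Real.exp (Lf α (c - u))) u := by
  have hcu : 0 < c - u := by linarith
  have h1 := hasDerivAt_Ff hα0 hu
  have hin : HasDerivAt (fun x : ℝ => c - x) (-1) u := (hasDerivAt_id u).const_sub c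
  have h2 := (hasDerivAt_Ff hα0 hcu).comp u hin
  have h3 := h1.add h2
  have he : Phif α c = fun u => Ff α u + (Ff α ∘ fun x => c - x) u := by
    funext x; simp [Phif, Function.comp]
  rw [he]
  refine h3.congr_deriv (Eq.symm ?_)
  ring

lemma Ff_cont {α : ℝ} (hα0 : 0 < α) : Continuous (Ff α) := by
  apply Continuous.rpow_const (Real.continuous_exp.sub continuous_const)
  intro x; right; exact le_of_lt hα0

lemma Phif_cont {α c : ℝ} (hα0 : 0 < α) : Continuous (Phif α c) :=
  (Ff_cont hα0).add ((Ff_cont hα0).comp (continuous_const.sub continuous_id))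

lemma key (α : ℝ) (hα0 : 0 < α) (hα1 : α ≤ 1) (s t : ℝ) (hs : 0 < s) (ht : 0 < t)
    (hst : s < t) :
    min ((Real.exp (s + t) - 1) ^ α) (2 * (Real.exp ((s + t) / 2) - 1) ^ α)
      < (Real.exp s - 1) ^ α + (Real.exp t - 1) ^ α := by
  set c : ℝ := s + t with hc
  have hc0 : 0 < c := by positivity
  have hsc2 : s < c / 2 := by rw [hc]; linarith
  have hcs : c - s = t := by rw [hc]; ring
  rcases eq_or_lt_of_le hα1 with hα1' | hα1'
  · -- α = 1 : pure algebra
    subst hα1'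
    simp only [Real.rpow_one]
    refine lt_of_le_of_lt (min_le_right _ _) ?_
    have ha : Real.exp (s / 2) ^ 2 = Real.exp s := by
      rw [pow_two, ← Real.exp_add]; ring_nf
    have hb : Real.exp (t / 2) ^ 2 = Real.exp t := by
      rw [pow_two, ← Real.exp_add]; ring_nf
    have hab : Real.exp (s / 2) * Real.exp (t / 2) = Real.exp (c / 2) := by
      rw [← Real.exp_add, hc]; ring_nf
    have hne : Real.exp (s / 2) - Real.exp (t / 2) ≠ 0 := by
      intro h
      have : Real.exp (s / 2) = Real.exp (t / 2) := by linarith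
      have := Real.exp_injective this
      linarith
    have hsq : 0 < (Real.exp (s / 2) - Real.exp (t / 2)) ^ 2 := sq_pos_of_ne_zero hne
    nlinarith [ha, hb, hab, hsq]
  · -- α < 1 : analytic argument
    have hDc2 : DD α c (c / 2) = 0 := by
      have h2 : c - c / 2 = c / 2 := by ring
      simp [DD, h2]
    by_cases hcase : ∃ u, u ∈ Set.Ioc (0 : ℝ) s ∧ DD α c u ≤ 0
    · -- midpoint beats
      obtain ⟨s₂, hs₂, hDs₂⟩ := hcase
      have hs₂0 : 0 < s₂ := hs₂.1
      have hs₂c : s₂ < c / 2 := lt_of_le_of_lt hs₂.2 hsc2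
      -- strict convexity of DD on [s₂, c/2]
      have hDDderiv : ∀ u ∈ Set.Ioo (0 : ℝ) c, HasDerivAt (DD α c) (D1f α c u) u :=
        fun u hu => hasDerivAt_DD hu.1 hu.2
      have hconv : StrictConvexOn ℝ (Set.Icc s₂ (c / 2)) (DD α c) := by
        apply strictConvexOn_of_deriv2_pos (convex_Icc _ _)
        · intro u hu
          have hu0 : 0 < u := lt_of_lt_of_le hs₂0 hu.1
          have huc : u < c := lt_of_le_of_lt hu.2 (by linarith)
          exact ((hDDderiv u ⟨hu0, huc⟩).differentiableAt.continuousAt).continuousWithinAt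
        · intro x hx
          rw [interior_Icc] at hx
          have hx0 : 0 < x := lt_trans hs₂0 hx.1
          have hxc2 : x < c / 2 := hx.2
          have hxc : x < c := by linarith
          have heq : deriv (DD α c) =ᶠ[nhds x] D1f α c := by
            filter_upwards [isOpen_Ioo.mem_nhds (show x ∈ Set.Ioo (0:ℝ) c from ⟨hx0, hxc⟩)]
              with y hy
            exact (hDDderiv y hy).deriv
          have h2 : deriv (deriv (DD α c)) x = deriv (D1f α c) x :=
            Filter.EventuallyEq.deriv_eq heq
          have h3 := hasDerivAt_D1f (α := α) hx0 hxc
          show 0 < deriv^[2] (DD α c) x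
          have hit : deriv^[2] (DD α c) x = deriv (deriv (DD α c)) x := rfl
          rw [hit, h2, h3.deriv]
          -- positivity
          have hxcx : x < c - x := by linarith
          set a := Real.exp x with hadef
          set b := Real.exp (c - x) with hbdef
          have ha1 : 1 < a := by
            rw [hadef, show (1:ℝ) = Real.exp 0 by rw [Real.exp_zero]]
            exact Real.exp_lt_exp.mpr hx0
          have hb1 : a < b := Real.exp_lt_exp.mpr hxcx
          have hA : b / (b - 1) ^ 2 < a / (a - 1) ^ 2 := by
            rw [div_lt_div_iff₀ (by nlinarith) (by nlinarith)]
            nlinarith [mul_pos (sub_pos.mpr hb1) (show (0:ℝ) < a * b - 1 by nlinarith)]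
          have h5 : -a / (a - 1) ^ 2 + b / (b - 1) ^ 2 < 0 := by
            have : -a / (a - 1) ^ 2 = -(a / (a - 1) ^ 2) := by ring
            rw [this]; linarith
          exact mul_pos_of_neg_of_neg (by linarith) h5
      -- DD < 0 on (s, c/2)
      have hDneg : ∀ x ∈ Set.Ioo s (c / 2), DD α c x < 0 := by
        intro x hx
        have h₁ : s₂ < x := lt_of_le_of_lt hs₂.2 hx.1
        set lam : ℝ := (c / 2 - x) / (c / 2 - s₂) with hlamdef
        set mu : ℝ := (x - s₂) / (c / 2 - s₂) with hmudef
        have hd : 0 < c / 2 - s₂ := by linarith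
        have hlam : 0 < lam := div_pos (by linarith [hx.2]) hd
        have hmu : 0 < mu := div_pos (by linarith) hd
        have hsum : lam + mu = 1 := by
          rw [hlamdef, hmudef, ← add_div, div_eq_one_iff_eq (ne_of_gt hd)]
          ring
        have hcomb : lam * s₂ + mu * (c / 2) = x := by
          rw [hlamdef, hmudef, div_mul_eq_mul_div, div_mul_eq_mul_div, ← add_div,
            div_eq_iff (ne_of_gt hd)]
          ring
        have hcm := hconv.2 (Set.left_mem_Icc.2 (le_of_lt hs₂c))
          (Set.right_mem_Icc.2 (le_of_lt hs₂c)) (ne_of_lt hs₂c) hlam hmu hsum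
        rw [smul_eq_mul, smul_eq_mul, smul_eq_mul, smul_eq_mul, hcomb, hDc2] at hcm
        nlinarith [mul_nonpos_of_nonneg_of_nonpos (le_of_lt hlam) hDs₂]
      -- Phif strictly decreasing on [s, c/2]
      have hanti : StrictAntiOn (Phif α c) (Set.Icc s (c / 2)) := by
        apply strictAntiOn_of_deriv_neg (convex_Icc _ _)
          (Phif_cont hα0).continuousOn
        intro x hx
        rw [interior_Icc] at hx
        have hx0 : 0 < x := lt_trans hs hx.1
        have hxc : x < c := by linarith [hx.2]
        rw [(hasDerivAt_Phif hα0 hx0 hxc).deriv]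
        have hDx : DD α c x < 0 := hDneg x hx
        have : Lf α x < Lf α (c - x) := by
          have : DD α c x = Lf α x - Lf α (c - x) := rfl
          linarith [hDx, this.symm.le]
        have := Real.exp_lt_exp.mpr this
        linarith
      have hlt : Phif α c (c / 2) < Phif α c s :=
        hanti ⟨le_refl s, le_of_lt hsc2⟩ ⟨le_of_lt hsc2, le_refl _⟩ hsc2
      have hmid : Phif α c (c / 2) = 2 * (Real.exp (c / 2) - 1) ^ α := by
        have h2 : c - c / 2 = c / 2 := by ring
        simp [Phif, Ff, h2]; ring
      have hPs : Phif α c s = (Real.exp s - 1) ^ α + (Real.exp t - 1) ^ α := by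
        simp [Phif, Ff, hcs]
      refine lt_of_le_of_lt (min_le_right _ _) ?_
      rw [← hPs, ← hmid]; exact hlt
    · -- endpoint beats
      push_neg at hcase
      have hDpos : ∀ u ∈ Set.Ioc (0 : ℝ) s, 0 < DD α c u := hcase
      have hmono : StrictMonoOn (Phif α c) (Set.Icc 0 s) := by
        apply strictMonoOn_of_deriv_pos (convex_Icc _ _)
          (Phif_cont hα0).continuousOn
        intro x hx
        rw [interior_Icc] at hx
        have hx0 : 0 < x := hx.1
        have hxc : x < c := by linarith [hx.2]
        rw [(hasDerivAt_Phif hα0 hx0 hxc).deriv]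
        have hDx : 0 < DD α c x := hDpos x ⟨hx.1, le_of_lt hx.2⟩
        have : Lf α (c - x) < Lf α x := by
          have h0 : DD α c x = Lf α x - Lf α (c - x) := rfl
          linarith [h0 ▸ hDx]
        have := Real.exp_lt_exp.mpr this
        linarith
      have hlt : Phif α c 0 < Phif α c s :=
        hmono ⟨le_refl 0, le_of_lt hs⟩ ⟨le_of_lt hs, le_refl s⟩ hs
      have hP0 : Phif α c 0 = (Real.exp c - 1) ^ α := by
        simp [Phif, Ff, Real.exp_zero, Real.zero_rpow (ne_of_gt hα0)]
      have hPs : Phif α c s = (Real.exp s - 1) ^ α + (Real.exp t - 1) ^ α := by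
        simp [Phif, Ff, hcs]
      refine lt_of_le_of_lt (min_le_left _ _) ?_
      rw [← hPs, ← hP0]; exact hlt

theorem stmt_13 (α σ2 γ R : ℝ) (hα0 : 0 < α) (hα1 : α ≤ 1) (hσ : 0 < σ2) (hγ : 0 < γ)
    (N : ℕ) (hN : 0 < N) (p : Fin N → ℝ) (hp : ∀ n, 0 ≤ p n)
    (hrate : (1 / (N : ℝ)) * ∑ n, Real.logb 2 (1 + p n / σ2) = R)
    (hopt : ∀ q : Fin N → ℝ, (∀ n, 0 ≤ q n) →
      (1 / (N : ℝ)) * ∑ n, Real.logb 2 (1 + q n / σ2) = R →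
      (γ / (N : ℝ)) * ∑ n, (p n) ^ α ≤ (γ / (N : ℝ)) * ∑ n, (q n) ^ α) :
    ∀ n n' : Fin N, 0 < p n → 0 < p n' → p n = p n' := by
  intro n n' hn hn'
  by_contra hne
  have hnn' : n ≠ n' := fun h => hne (by rw [h])
  set s : ℝ := Real.log (1 + p n / σ2) with hsdef
  set t : ℝ := Real.log (1 + p n' / σ2) with htdef
  have h1n : 1 < 1 + p n / σ2 := by
    have := div_pos hn hσ; linarith
  have h1n' : 1 < 1 + p n' / σ2 := by
    have := div_pos hn' hσ; linarith
  have hs : 0 < s := Real.log_pos h1n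
  have ht : 0 < t := Real.log_pos h1n'
  have hes : Real.exp s = 1 + p n / σ2 := Real.exp_log (by linarith)
  have het : Real.exp t = 1 + p n' / σ2 := Real.exp_log (by linarith)
  have hpn : p n = σ2 * (Real.exp s - 1) := by
    rw [hes]; field_simp; ring
  have hpn' : p n' = σ2 * (Real.exp t - 1) := by
    rw [het]; field_simp; ring
  have hst : s ≠ t := by
    intro h
    apply hne
    have : (1 : ℝ) + p n / σ2 = 1 + p n' / σ2 := by rw [← hes, ← het, h]
    have h2 : p n / σ2 = p n' / σ2 := by linarith
    field_simp at h2
    exact h2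
  have hkey : min ((Real.exp (s + t) - 1) ^ α) (2 * (Real.exp ((s + t) / 2) - 1) ^ α)
      < (Real.exp s - 1) ^ α + (Real.exp t - 1) ^ α := by
    rcases lt_or_gt_of_ne hst with h | h
    · exact key α hα0 hα1 s t hs ht h
    · have h2 := key α hα0 hα1 t s ht hs h
      rw [show t + s = s + t from add_comm t s] at h2
      linarith [h2]
  -- sum splitting helper
  have hsplit : ∀ g h : Fin N → ℝ, (∀ k, k ≠ n → k ≠ n' → g k = h k) →
      ∑ k, g k = g n + g n' + ((∑ k, h k) - h n - h n') := by
    intro g h hgh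
    have e1 : ∑ k, (g k - h k) = ∑ k ∈ ({n, n'} : Finset (Fin N)), (g k - h k) := by
      refine (Finset.sum_subset (Finset.subset_univ _) ?_).symm
      intro k _ hk
      simp only [Finset.mem_insert, Finset.mem_singleton] at hk
      push_neg at hk
      rw [hgh k hk.1 hk.2, sub_self]
    rw [Finset.sum_sub_distrib, Finset.sum_pair hnn'] at e1
    linarith
  have hσα : 0 < σ2 ^ α := Real.rpow_pos_of_pos hσ α
  have hexp_nonneg : ∀ v : ℝ, 0 ≤ v → 0 ≤ Real.exp v - 1 := by
    intro v hv
    have : Real.exp 0 ≤ Real.exp v := Real.exp_le_exp.mpr hv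
    rw [Real.exp_zero] at this; linarith
  -- obtain better pair (A, B)
  obtain ⟨A, B, hA0, hB0, hlog, hcost⟩ :
      ∃ A B : ℝ, 0 ≤ A ∧ 0 ≤ B ∧
        Real.logb 2 (1 + A / σ2) + Real.logb 2 (1 + B / σ2)
          = Real.logb 2 (1 + p n / σ2) + Real.logb 2 (1 + p n' / σ2) ∧
        A ^ α + B ^ α < p n ^ α + p n' ^ α := by
    rcases min_lt_iff.mp hkey with h1 | h2
    · refine ⟨σ2 * (Real.exp (s + t) - 1), 0, ?_, le_refl 0, ?_, ?_⟩
      · exact mul_nonneg (le_of_lt hσ) (hexp_nonneg _ (by linarith))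
      · have e1 : 1 + σ2 * (Real.exp (s + t) - 1) / σ2 = Real.exp (s + t) := by
          field_simp
          ring
        rw [e1, ← hes, ← het]
        simp [Real.logb, Real.log_exp, Real.log_one]
        ring
      · rw [Real.zero_rpow (ne_of_gt hα0), hpn, hpn',
          Real.mul_rpow (le_of_lt hσ) (hexp_nonneg _ (by linarith)),
          Real.mul_rpow (le_of_lt hσ) (hexp_nonneg _ (le_of_lt hs)),
          Real.mul_rpow (le_of_lt hσ) (hexp_nonneg _ (le_of_lt ht))]
        have := mul_lt_mul_of_pos_left h1 hσα
        nlinarith [this]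
    · refine ⟨σ2 * (Real.exp ((s + t) / 2) - 1), σ2 * (Real.exp ((s + t) / 2) - 1),
        ?_, ?_, ?_, ?_⟩
      · exact mul_nonneg (le_of_lt hσ) (hexp_nonneg _ (by linarith))
      · exact mul_nonneg (le_of_lt hσ) (hexp_nonneg _ (by linarith))
      · have e1 : 1 + σ2 * (Real.exp ((s + t) / 2) - 1) / σ2 = Real.exp ((s + t) / 2) := by
          field_simp
          ring
        rw [e1, ← hes, ← het]
        simp [Real.logb, Real.log_exp]
        ring
      · rw [hpn, hpn',
          Real.mul_rpow (le_of_lt hσ) (hexp_nonneg _ (by linarith)),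
          Real.mul_rpow (le_of_lt hσ) (hexp_nonneg _ (le_of_lt hs)),
          Real.mul_rpow (le_of_lt hσ) (hexp_nonneg _ (le_of_lt ht))]
        have := mul_lt_mul_of_pos_left h2 hσα
        nlinarith [this]
  -- build the competitor q
  set q : Fin N → ℝ := fun k => if k = n then A else if k = n' then B else p k with hqdef
  have hqn : q n = A := by simp [hqdef]
  have hqn' : q n' = B := by
    simp [hqdef, Ne.symm hnn']
  have hq0 : ∀ k, 0 ≤ q k := by
    intro k
    simp only [hqdef]
    split_ifs
    · exact hA0
    · exact hB0
    · exact hp k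
  have hqoff : ∀ k, k ≠ n → k ≠ n' → q k = p k := by
    intro k hk1 hk2
    simp only [hqdef]
    rw [if_neg hk1, if_neg hk2]
  have hqrate : (1 / (N : ℝ)) * ∑ k, Real.logb 2 (1 + q k / σ2) = R := by
    have e := hsplit (fun k => Real.logb 2 (1 + q k / σ2))
      (fun k => Real.logb 2 (1 + p k / σ2))
      (fun k hk1 hk2 => congrArg (fun z => Real.logb 2 (1 + z / σ2)) (hqoff k hk1 hk2))
    simp only [hqn, hqn'] at e
    have e2 : ∑ k, Real.logb 2 (1 + q k / σ2) = ∑ k, Real.logb 2 (1 + p k / σ2) := by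
      rw [e]; linarith [hlog]
    rw [e2]; exact hrate
  have hqcost := hopt q hq0 hqrate
  have e3 := hsplit (fun k => q k ^ α) (fun k => p k ^ α)
    (fun k hk1 hk2 => congrArg (fun z => z ^ α) (hqoff k hk1 hk2))
  simp only [hqn, hqn'] at e3
  have hlt : ∑ k, q k ^ α < ∑ k, p k ^ α := by
    rw [e3]; linarith [hcost]
  have hpos : 0 < γ / (N : ℝ) := div_pos hγ (by exact_mod_cast hN)
  have := (mul_le_mul_iff_right₀ hpos).mp hqcost
  linarith
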